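/- Fix an integer N ≥ 3, a time step τ > 0, and node indices j ∈ ℤ/Nℤ. Let X^m_j ∈ ℝ² be vertices with segments h^m_j := X^m_j − X^m_{j−1} ≠ 0 and normals n^m_j := −(h^m_j)^⊥/‖h^m_j‖ where (u₁,u₂)^⊥ := (−u₂,u₁); let κ^m_j ∈ ℝ be given, and let X^{m+1}_j ∈ ℝ², V^{m+1}_j ∈ ℝ, κ^{m+1}_j ∈ ℝ satisfy, with δX_j := X^{m+1}_j − X^m_j and h^{m+1}_j := X^{m+1}_j − X^{m+1}_{j−1}: (E1) for every φ : ℤ/Nℤ → ℝ, ∑_j ‖h^m_j‖ [ (n^m_j·δX_{j−1}) φ_{j−1} + (n^m_j·δX_j) φ_j ] = τ ∑_j ‖h^m_j‖ [ V^{m+1}_{j−1} φ_{j−1} + V^{m+1}_j φ_j ]; (E2) for every ω : ℤ/Nℤ → ℝ², (1/2)∑_j ‖h^m_j‖ [ V^{m+1}_{j−1}(n^m_j·ω_{j−1}) + V^{m+1}_j(n^m_j·ω_j) ] = ∑_j (1/‖h^m_j‖) [ −(κ^{m+1}_j − κ^{m+1}_{j−1}) n^m_j + (((κ^{m+1}_{j−1})²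 + (κ^{m+1}_j)²)/4) h^{m+1}_j ] · (ω_j − ω_{j−1}); (E3) for every ψ : ℤ/Nℤ → ℝ, (1/2)∑_j ‖h^m_j‖ [ (κ^{m+1}_{j−1} − κ^m_{j−1}) ψ_{j−1} + (κ^{m+1}_j − κ^m_j) ψ_j ] = ∑_j (1/‖h^m_j‖) ( n^m_j·(δX_j − δX_{j−1}) )(ψ_j − ψ_{j−1}) − (1/2)∑_j (1/‖h^m_j‖) ( h^{m+1}_j·(δX_j − δX_{j−1}) ) [ κ^{m+1}_{j−1} ψ_{j−1} + κ^{m+1}_j ψ_j ]. Then the discretized Willmore energy decreases: (1/4)∑_j ‖h^{m+1}_j‖ ( (κ^{m+1}_{j−1})² + (κ^{m+1}_j)² ) ≤ (1/4)∑_j ‖h^m_j‖ ( (κ^m_{j−1})² + (κ^m_j)² ). (Theorem 4.1, unconditional energy dissipation of the fully discrete PFEM) -/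

import Mathlib

noncomputable section

/-- The plane `ℝ²` with the Euclidean norm. -/
abbrev E2 : Type := EuclideanSpace ℝ (Fin 2)

/-- Clockwise-rotation convention: `(u₁, u₂)^⊥ = (−u₂, u₁)`. -/
def perp (u : E2) : E2 := (WithLp.equiv 2 (Fin 2 → ℝ)).symm ![-(u 1), u 0]

/-- Theorem 4.1 (unconditional energy dissipation of the fully discrete PFEM):
a solution of the backward-Euler scheme (E1)-(E3) satisfies
`W^{m+1} ≤ W^m` for the discretized Willmore energy
`W^m = (1/4)∑_j ‖h^m_j‖((κ^m_{j−1})² + (κ^m_j)²)`, unconditionally in `τ`. -/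
theorem fully_discrete_energy_dissipation
    (N : ℕ) [NeZero N] (hN : 3 ≤ N) (τ : ℝ) (hτ : 0 < τ)
    (Xm Xm1 : ZMod N → E2) (Vm1 κm κm1 : ZMod N → ℝ)
    (hm hm1 δX : ZMod N → E2)
    (hmdef : ∀ j, hm j = Xm j - Xm (j-1))
    (hm1def : ∀ j, hm1 j = Xm1 j - Xm1 (j-1))
    (δXdef : ∀ j, δX j = Xm1 j - Xm j)
    (hmne : ∀ j, hm j ≠ 0)
    (n : ZMod N → E2) (ndef : ∀ j, n j = -(‖hm j‖⁻¹ • perp (hm j)))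
    (E1 : ∀ φ : ZMod N → ℝ,
      ∑ j, ‖hm j‖ * ((inner ℝ (n j) (δX (j-1)) : ℝ) * φ (j-1)
          + (inner ℝ (n j) (δX j) : ℝ) * φ j)
        = τ * ∑ j, ‖hm j‖ * (Vm1 (j-1) * φ (j-1) + Vm1 j * φ j))
    (E2 : ∀ ω : ZMod N → E2,
      (1/2) * ∑ j, ‖hm j‖ * (Vm1 (j-1) * (inner ℝ (n j) (ω (j-1)) : ℝ)
          + Vm1 j * (inner ℝ (n j) (ω j) : ℝ))
        = ∑ j, ‖hm j‖⁻¹ *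
            (inner ℝ (-(κm1 j - κm1 (j-1)) • n j
                + ((κm1 (j-1) ^ 2 + κm1 j ^ 2)/4) • hm1 j) (ω j - ω (j-1)) : ℝ))
    (E3 : ∀ ψ : ZMod N → ℝ,
      (1/2) * ∑ j, ‖hm j‖ * ((κm1 (j-1) - κm (j-1)) * ψ (j-1) + (κm1 j - κm j) * ψ j)
        = ∑ j, ‖hm j‖⁻¹ * (inner ℝ (n j) (δX j - δX (j-1)) : ℝ) * (ψ j - ψ (j-1))
          - (1/2) * ∑ j, ‖hm j‖⁻¹ * (inner ℝ (hm1 j) (δX j - δX (j-1)) : ℝ)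
              * (κm1 (j-1) * ψ (j-1) + κm1 j * ψ j))
    :
    (1/4) * ∑ j, ‖hm1 j‖ * (κm1 (j-1) ^ 2 + κm1 j ^ 2)
      ≤ (1/4) * ∑ j, ‖hm j‖ * (κm (j-1) ^ 2 + κm j ^ 2) := by
  classical
  have hnpos : ∀ j, (0:ℝ) < ‖hm j‖ := fun j => norm_pos_iff.mpr (hmne j)
  have hΔ : ∀ j : ZMod N, δX j - δX (j-1) = hm1 j - hm j := by
    intro j
    rw [δXdef, δXdef, hm1def, hmdef]
    abel
  set T : ℝ := ∑ j, ‖hm j‖⁻¹ * (inner ℝ (n j) (δX j - δX (j-1)) : ℝ)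
      * (κm1 j - κm1 (j-1)) with hTdef
  set S : ℝ := ∑ j, ‖hm j‖⁻¹ * (inner ℝ (hm1 j) (δX j - δX (j-1)) : ℝ)
      * (κm1 (j-1) ^ 2 + κm1 j ^ 2) with hSdef
  set K : ℝ := ∑ j, ‖hm j‖ * ((κm1 (j-1) - κm (j-1)) * κm1 (j-1)
      + (κm1 j - κm j) * κm1 j) with hKdef
  -- nonnegativity of the velocity sum
  have hVnonneg : (0:ℝ) ≤ ∑ j, ‖hm j‖ * (Vm1 (j-1) * Vm1 (j-1) + Vm1 j * Vm1 j) := by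
    apply Finset.sum_nonneg
    intro j _
    have := norm_nonneg (hm j)
    nlinarith [mul_self_nonneg (Vm1 (j-1)), mul_self_nonneg (Vm1 j)]
  -- E1 with φ = Vm1, rewritten
  have h1 := E1 Vm1
  have h2 := E2 δX
  have h3 := E3 κm1
  -- LHS of h2 equals LHS of h1 (commutativity)
  have h2lhs : ∑ j, ‖hm j‖ * (Vm1 (j-1) * (inner ℝ (n j) (δX (j-1)) : ℝ)
          + Vm1 j * (inner ℝ (n j) (δX j) : ℝ))
      = ∑ j, ‖hm j‖ * ((inner ℝ (n j) (δX (j-1)) : ℝ) * Vm1 (j-1)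
          + (inner ℝ (n j) (δX j) : ℝ) * Vm1 j) := by
    apply Finset.sum_congr rfl
    intro j _
    ring
  -- RHS of h2 equals -T + (1/4) S
  have h2rhs : ∑ j, ‖hm j‖⁻¹ *
        (inner ℝ (-(κm1 j - κm1 (j-1)) • n j
            + ((κm1 (j-1) ^ 2 + κm1 j ^ 2)/4) • hm1 j) (δX j - δX (j-1)) : ℝ)
      = -T + (1/4) * S := by
    have step : ∀ j : ZMod N, ‖hm j‖⁻¹ *
          (inner ℝ (-(κm1 j - κm1 (j-1)) • n j
              + ((κm1 (j-1) ^ 2 + κm1 j ^ 2)/4) • hm1 j) (δX j - δX (j-1)) : ℝ)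
        = -(‖hm j‖⁻¹ * (inner ℝ (n j) (δX j - δX (j-1)) : ℝ) * (κm1 j - κm1 (j-1)))
          + (1/4) * (‖hm j‖⁻¹ * (inner ℝ (hm1 j) (δX j - δX (j-1)) : ℝ)
              * (κm1 (j-1) ^ 2 + κm1 j ^ 2)) := by
      intro j
      rw [inner_add_left, real_inner_smul_left, real_inner_smul_left]
      ring
    rw [Finset.sum_congr rfl (fun j _ => step j), Finset.sum_add_distrib,
      Finset.sum_neg_distrib, ← Finset.mul_sum]
  -- key nonnegativity
  have key : (0:ℝ) ≤ -T + (1/4) * S := by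
    rw [← h2rhs, ← h2, h2lhs, h1]
    positivity
  -- rewrite h3 as (1/2) K = T - (1/2) S
  have e2 : ∑ j, ‖hm j‖⁻¹ * (inner ℝ (hm1 j) (δX j - δX (j-1)) : ℝ)
        * (κm1 (j-1) * κm1 (j-1) + κm1 j * κm1 j) = S := by
    rw [hSdef]
    exact Finset.sum_congr rfl (fun j _ => by ring)
  rw [e2] at h3
  have h3' : (1/2) * K = T - (1/2) * S := h3
  -- pointwise bound for K
  have hKb : (1/2) * ((∑ j, ‖hm j‖ * (κm1 (j-1) ^ 2 + κm1 j ^ 2))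
        - ∑ j, ‖hm j‖ * (κm (j-1) ^ 2 + κm j ^ 2)) ≤ K := by
    rw [← Finset.sum_sub_distrib, Finset.mul_sum]
    apply Finset.sum_le_sum
    intro j _
    have h0 := (hnpos j).le
    nlinarith [sq_nonneg (κm1 (j-1) - κm (j-1)), sq_nonneg (κm1 j - κm j)]
  -- pointwise bound for S
  have hSb : (∑ j, ‖hm1 j‖ * (κm1 (j-1) ^ 2 + κm1 j ^ 2))
        - ∑ j, ‖hm j‖ * (κm1 (j-1) ^ 2 + κm1 j ^ 2) ≤ S := by
    rw [← Finset.sum_sub_distrib]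
    apply Finset.sum_le_sum
    intro j _
    rw [hΔ j]
    have hip : ‖hm j‖ * (‖hm1 j‖ - ‖hm j‖) ≤ (inner ℝ (hm1 j) (hm1 j - hm j) : ℝ) := by
      rw [inner_sub_right, real_inner_self_eq_norm_sq]
      have h1 := real_inner_le_norm (hm1 j) (hm j)
      nlinarith [sq_nonneg (‖hm1 j‖ - ‖hm j‖)]
    have hip2 : ‖hm1 j‖ - ‖hm j‖ ≤ ‖hm j‖⁻¹ * (inner ℝ (hm1 j) (hm1 j - hm j) : ℝ) := by
      have := mul_le_mul_of_nonneg_left hip (inv_nonneg.mpr (norm_nonneg (hm j)))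
      rwa [← mul_assoc, inv_mul_cancel₀ (ne_of_gt (hnpos j)), one_mul] at this
    have hκ : (0:ℝ) ≤ κm1 (j-1) ^ 2 + κm1 j ^ 2 := by positivity
    calc ‖hm1 j‖ * (κm1 (j-1) ^ 2 + κm1 j ^ 2) - ‖hm j‖ * (κm1 (j-1) ^ 2 + κm1 j ^ 2)
        = (‖hm1 j‖ - ‖hm j‖) * (κm1 (j-1) ^ 2 + κm1 j ^ 2) := by ring
      _ ≤ (‖hm j‖⁻¹ * (inner ℝ (hm1 j) (hm1 j - hm j) : ℝ)) * (κm1 (j-1) ^ 2 + κm1 j ^ 2) :=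
          mul_le_mul_of_nonneg_right hip2 hκ
      _ = ‖hm j‖⁻¹ * (inner ℝ (hm1 j) (hm1 j - hm j) : ℝ) * (κm1 (j-1) ^ 2 + κm1 j ^ 2) := by ring
  linarith
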